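/- Let γ > 0 and Δ = min{1/4, 1/(2(1+γ))}. For all 0 ≤ δ < Δ and all 0 ≤ r ≤ q with q ∈ (0,1): 2δ·r + 1 + γ·r(1−r)·4δ² < q + 1 + γ·q(1−q). -/

import Mathlib

theorem stmt_12 (γ : ℝ) (hγ : 0 < γ) :
    ∀ δ : ℝ, 0 ≤ δ → δ < min (1/4) (1/(2*(1+γ))) →
    ∀ r q : ℝ, 0 ≤ r → r ≤ q → 0 < q → q < 1 →
      2*δ*r + 1 + γ*(r*(1-r))*(4*δ^2) < q + 1 + γ*(q*(1-q)) := by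
  intro δ hδ0 hδ r q hr hrq hq0 hq1
  have h1 : δ < 1/4 := lt_of_lt_of_le hδ (min_le_left _ _)
  have h2 : δ < 1/(2*(1+γ)) := lt_of_lt_of_le hδ (min_le_right _ _)
  have hγ1 : 0 < 2*(1+γ) := by linarith
  have h2' : δ * (2*(1+γ)) < 1 := (lt_div_iff₀ hγ1).mp h2
  rcases le_or_gt q (1/2) with hq | hq
  · -- r(1-r) ≤ q(1-q): (q-r)(1-q-r) ≥ 0
    nlinarith [mul_nonneg (sub_nonneg.2 hrq) (by linarith : (0:ℝ) ≤ 1 - q - r),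
      mul_nonneg hδ0 hδ0, mul_pos hq0 (by linarith : (0:ℝ) < 1 - q),
      mul_nonneg hδ0 hr, mul_nonneg (mul_nonneg hγ.le hδ0) hδ0,
      mul_nonneg (mul_nonneg hγ.le (mul_nonneg hq0.le (by linarith : (0:ℝ) ≤ 1 - q))) (by nlinarith : (0:ℝ) ≤ 1 - 4*δ^2)]
  · -- r(1-r) ≤ 1/4
    have hr14 : r*(1-r) ≤ 1/4 := by nlinarith [sq_nonneg (r - 1/2)]
    have key : 2*δ*q + γ*δ^2 < q := by
      have a1 : 2*δ*q < q/(1+γ) := by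
        rw [lt_div_iff₀ (by linarith : (0:ℝ) < 1+γ)]
        nlinarith
      have a2 : γ*δ^2 < γ*q/(1+γ) := by
        rw [lt_div_iff₀ (by linarith : (0:ℝ) < 1+γ)]
        nlinarith [mul_nonneg hγ.le hδ0]
      have : q/(1+γ) + γ*q/(1+γ) = q := by field_simp
      linarith
    nlinarith [mul_nonneg (mul_nonneg hγ.le (mul_nonneg hδ0 hδ0)) (by linarith : (0:ℝ) ≤ 1/4 - r*(1-r)),
      mul_pos (mul_pos hγ hq0) (by linarith : (0:ℝ) < 1 - q),
      mul_nonneg hδ0 (by linarith : (0:ℝ) ≤ q - r)]
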